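/- Let A be a commutative ring which is an ℝ-algebra. For all f, h ∈ Quaternion A, writing h₀ ∈ A for the scalar part of h and f_v, h_v for the vector parts of f and h, the vector part of h * f * star h equals ⟨h_v, f_v⟩·h_v + h₀²·f_v + 2h₀·(h_v ∧ f_v) − (h_v ∧ f_v) ∧ h_v. (Lemma 5.2, equation (5.1).) -/

import Mathlib

open Quaternion

/-- The pairing `⟨u,v⟩_*`: the scalar part of `u * star v`. -/
def pairStar {A : Type*} [CommRing A] (u v : Quaternion A) : A := (u * star v).re

/-- The wedge `u ∧ v := (u*v − v*u)/2`. -/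
noncomputable def wedgeQ {A : Type*} [CommRing A] [Algebra ℝ A] (u v : Quaternion A) :
    Quaternion A :=
  (2 : ℝ)⁻¹ • (u * v - v * u)

private lemma half_add {A : Type*} [CommRing A] [Algebra ℝ A] (x : A) :
    (2 : ℝ)⁻¹ • (x + x) = x := by
  rw [Algebra.smul_def, ← two_mul, (map_ofNat (algebraMap ℝ A) 2).symm,
    ← mul_assoc, ← map_mul]
  norm_num

private lemma qmk_mul {A : Type*} [CommRing A] (a0 a1 a2 a3 b0 b1 b2 b3 : A) :
    (⟨a0, a1, a2, a3⟩ * ⟨b0, b1, b2, b3⟩ : Quaternion A)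
      = (⟨a0 * b0 - a1 * b1 - a2 * b2 - a3 * b3, a0 * b1 + a1 * b0 + a2 * b3 - a3 * b2,
          a0 * b2 - a1 * b3 + a2 * b0 + a3 * b1, a0 * b3 + a1 * b2 - a2 * b1 + a3 * b0⟩ :
          Quaternion A) := by
  ext
  · erw [Quaternion.re_mul]
  · erw [Quaternion.imI_mul]
  · erw [Quaternion.imJ_mul]
  · erw [Quaternion.imK_mul]

private lemma qany_mul {A : Type*} [CommRing A] (x : Quaternion A) (b0 b1 b2 b3 : A) :
    (x * ⟨b0, b1, b2, b3⟩ : Quaternion A)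
      = (⟨x.re * b0 - x.imI * b1 - x.imJ * b2 - x.imK * b3,
          x.re * b1 + x.imI * b0 + x.imJ * b3 - x.imK * b2,
          x.re * b2 - x.imI * b3 + x.imJ * b0 + x.imK * b1,
          x.re * b3 + x.imI * b2 - x.imJ * b1 + x.imK * b0⟩ : Quaternion A) := by
  ext
  · erw [Quaternion.re_mul]
  · erw [Quaternion.imI_mul]
  · erw [Quaternion.imJ_mul]
  · erw [Quaternion.imK_mul]

private lemma qmk_star {A : Type*} [CommRing A] (a0 a1 a2 a3 : A) :
    (star ⟨a0, a1, a2, a3⟩ : Quaternion A) = (⟨a0, -a1, -a2, -a3⟩ : Quaternion A) := by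
  ext
  · erw [Quaternion.re_star]
  · erw [Quaternion.imI_star]
  · erw [Quaternion.imJ_star]
  · erw [Quaternion.imK_star]

private lemma qmk_add {A : Type*} [CommRing A] (a0 a1 a2 a3 b0 b1 b2 b3 : A) :
    (⟨a0, a1, a2, a3⟩ + ⟨b0, b1, b2, b3⟩ : Quaternion A)
      = (⟨a0 + b0, a1 + b1, a2 + b2, a3 + b3⟩ : Quaternion A) := rfl

private lemma qmk_sub {A : Type*} [CommRing A] (a0 a1 a2 a3 b0 b1 b2 b3 : A) :
    (⟨a0, a1, a2, a3⟩ - ⟨b0, b1, b2, b3⟩ : Quaternion A)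
      = (⟨a0 - b0, a1 - b1, a2 - b2, a3 - b3⟩ : Quaternion A) := rfl

private lemma wedgeQ_mk {A : Type*} [CommRing A] [Algebra ℝ A]
    (a1 a2 a3 b1 b2 b3 : A) :
    wedgeQ ⟨0, a1, a2, a3⟩ ⟨0, b1, b2, b3⟩
      = ⟨0, a2 * b3 - a3 * b2, a3 * b1 - a1 * b3, a1 * b2 - a2 * b1⟩ := by
  unfold wedgeQ
  ext
  · show (2:ℝ)⁻¹ • _ = _
    simp [qmk_mul, qmk_sub]
    ring
  · show (2:ℝ)⁻¹ • _ = _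
    rw [show ((⟨0, a1, a2, a3⟩ * ⟨0, b1, b2, b3⟩ - ⟨0, b1, b2, b3⟩ * ⟨0, a1, a2, a3⟩ :
        Quaternion A)).imI = (a2 * b3 - a3 * b2) + (a2 * b3 - a3 * b2) by
      simp [qmk_mul, qmk_sub]; ring]
    exact half_add _
  · show (2:ℝ)⁻¹ • _ = _
    rw [show ((⟨0, a1, a2, a3⟩ * ⟨0, b1, b2, b3⟩ - ⟨0, b1, b2, b3⟩ * ⟨0, a1, a2, a3⟩ :
        Quaternion A)).imJ = (a3 * b1 - a1 * b3) + (a3 * b1 - a1 * b3) by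
      simp [qmk_mul, qmk_sub]; ring]
    exact half_add _
  · show (2:ℝ)⁻¹ • _ = _
    rw [show ((⟨0, a1, a2, a3⟩ * ⟨0, b1, b2, b3⟩ - ⟨0, b1, b2, b3⟩ * ⟨0, a1, a2, a3⟩ :
        Quaternion A)).imK = (a1 * b2 - a2 * b1) + (a1 * b2 - a2 * b1) by
      simp [qmk_mul, qmk_sub]; ring]
    exact half_add _

theorem im_conjugation_formula {A : Type*} [CommRing A] [Algebra ℝ A]
    (f h : Quaternion A) :
    (h * f * star h).im =
      ((pairStar h.im f.im : A) : Quaternion A) * h.im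
      + ((h.re ^ 2 : A) : Quaternion A) * f.im
      + ((2 * h.re : A) : Quaternion A) * wedgeQ h.im f.im
      - wedgeQ (wedgeQ h.im f.im) h.im := by
  have him : h.im = (⟨0, h.imI, h.imJ, h.imK⟩ : Quaternion A) := by ext <;> simp
  have fim : f.im = (⟨0, f.imI, f.imJ, f.imK⟩ : Quaternion A) := by ext <;> simp
  rw [him, fim, wedgeQ_mk, wedgeQ_mk]
  unfold pairStar
  ext <;>
    simp [qmk_mul, qany_mul, qmk_star, qmk_add, qmk_sub, Quaternion.re_mul, Quaternion.imI_mul, Quaternion.imJ_mul, Quaternion.imK_mul,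
      Quaternion.re_coe, Quaternion.imI_coe, Quaternion.imJ_coe, Quaternion.imK_coe,
      pow_two] <;>
    ring
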